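/- arXiv:2310.05611 — 2 statements merged into one kernel-verified Lean document; each statement's English description precedes it below -/
import Mathlib

section
/- Let $l \ge 1$ be a natural number, let $w_1, \dots, w_l \in \mathbb{C}$, let $z_1, \dots, z_l \in \mathbb{C}$ with $|z_m| = 1$ for all $m$, and let $R > 0$. Then there exists $b \in \mathbb{C}$ with $|b| \le 2 l R$ such that $|w_m + b z_m| \ge R$ for every $m = 1, \dots, l$. -/
/-- Given `l ≥ 1` points `w_1, …, w_l ∈ ℂ`, unimodular `z_1, …, z_l`, and `R > 0`, there is
`b ∈ ℂ` with `|b| ≤ 2lR` such that `|w_m + b z_m| ≥ R` for every `m`. -/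
theorem stmt1 (l : ℕ) (hl : 1 ≤ l) (w z : Fin l → ℂ)
    (hz : ∀ m, ‖z m‖ = 1) (R : ℝ) (hR : 0 < R) :
    ∃ b : ℂ, ‖b‖ ≤ 2 * l * R ∧ ∀ m, R ≤ ‖w m + b * z m‖ := by
  classical
  set f : Fin (l+1) → ℂ := fun k => ((2 * k * R : ℝ) : ℂ) with hf
  set S : Finset (Fin (l+1)) :=
    Finset.univ.filter (fun k => ∃ m, ‖w m + f k * z m‖ < R) with hS
  have key : ∀ k k' : Fin (l+1), k ≠ k' → ∀ m : Fin l,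
      ‖w m + f k * z m‖ < R → ‖w m + f k' * z m‖ < R → False := by
    intro k k' hkk m h1 h2
    have hd : ‖f k * z m - f k' * z m‖
        ≤ ‖w m + f k * z m‖ + ‖w m + f k' * z m‖ := by
      have he : f k * z m - f k' * z m = (w m + f k * z m) - (w m + f k' * z m) := by ring
      rw [he]
      exact norm_sub_le _ _
    have habs : ‖f k * z m - f k' * z m‖
        = |2 * (k : ℝ) * R - 2 * (k' : ℝ) * R| := by
      have : f k * z m - f k' * z m = (f k - f k') * z m := by ring
      rw [this, norm_mul, hz m, mul_one, hf, ← Complex.ofReal_sub, Complex.norm_real, Real.norm_eq_abs]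
    have hge : 2 * R ≤ |2 * (k : ℝ) * R - 2 * (k' : ℝ) * R| := by
      have hne : ((k : ℤ) : ℝ) ≠ ((k' : ℤ) : ℝ) := by
        exact_mod_cast fun h => hkk (Fin.ext (by exact_mod_cast h))
      have h1' : (1 : ℤ) ≤ |(k : ℤ) - (k' : ℤ)| :=
        Int.one_le_abs (sub_ne_zero.mpr (by exact_mod_cast hne))
      have h1r : (1 : ℝ) ≤ |(k : ℝ) - (k' : ℝ)| := by exact_mod_cast h1'
      have : 2 * (k : ℝ) * R - 2 * (k' : ℝ) * R = 2 * R * ((k : ℝ) - (k' : ℝ)) := by ring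
      rw [this, abs_mul, abs_of_pos (by linarith : (0:ℝ) < 2 * R)]
      nlinarith
    rw [habs] at hd
    linarith
  have hex : ∃ k : Fin (l+1), k ∉ S := by
    by_contra h
    push_neg at h
    have : S = Finset.univ := Finset.eq_univ_iff_forall.mpr h
    have hc : S.card = l + 1 := by rw [this]; simp
    -- pigeonhole: witnesses give an injection into Fin l
    set g : Fin (l+1) → Fin l := fun k =>
      if h : ∃ m, ‖w m + f k * z m‖ < R then h.choose else ⟨0, hl⟩ with hg
    have hgspec : ∀ k ∈ S, ‖w (g k) + f k * z (g k)‖ < R := by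
      intro k hk
      have hk' := (Finset.mem_filter.mp hk).2
      simp only [hg, dif_pos hk']
      exact hk'.choose_spec
    have hlt : (Finset.univ : Finset (Fin l)).card < S.card := by
      simp [hc]
    obtain ⟨k, hk, k', hk', hkk, hgk⟩ :=
      Finset.exists_ne_map_eq_of_card_lt_of_maps_to hlt (fun k _ => Finset.mem_univ (g k))
    exact key k k' hkk (g k) (hgspec k hk) (hgk ▸ hgspec k' hk')
  obtain ⟨k, hk⟩ := hex
  refine ⟨f k, ?_, ?_⟩
  · have : ‖f k‖ = 2 * (k : ℝ) * R := by
      rw [hf]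
      simp only [Complex.norm_real, Real.norm_eq_abs]
      exact abs_of_nonneg (by positivity)
    rw [this]
    have : (k : ℝ) ≤ l := by exact_mod_cast Nat.le_of_lt_succ k.isLt
    nlinarith
  · intro m
    by_contra hlt
    push_neg at hlt
    exact hk (Finset.mem_filter.mpr ⟨Finset.mem_univ _, ⟨m, hlt⟩⟩)
end

section
/- Let $h$ be a positive harmonic function on the open unit disc $\mathbb{D}$, let $\zeta_1 \ne \zeta_2$ be points of $\mathbb{T}$, and let $I$ be a closed subarc of $\mathbb{T}$ with endpoints $\zeta_1$ and $\zeta_2$. Let $f$ be holomorphic on $\mathbb{D}$ with $|f(r\zeta_i)| \le e^{h(r\zeta_i)}$ for all $0 \le r < 1$ and $i = 1,2$. Suppose further that there is a sequence $r_n \to 1^-$ in $[0,1)$ with $|f(r_n \zeta)| \le 1$ for all $\zeta \in I$ and all $n$. Then $|f| \le e^{h}$ on the entire sector $\{r\zeta : 0 \le r < 1,\ \zeta \in I\}$. -/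
open Filter

/-- `h` is harmonic on `s`: twice continuously differentiable with vanishing Laplacian
`∂²h/∂x² + ∂²h/∂y² = 0`. -/
def HarmonicOn (h : ℂ → ℝ) (s : Set ℂ) : Prop :=
  ContDiffOn ℝ 2 h s ∧ ∀ z ∈ s,
    fderiv ℝ (fun w => fderiv ℝ h w 1) z 1
      + fderiv ℝ (fun w => fderiv ℝ h w Complex.I) z Complex.I = 0


open Complex Metric Set intervalIntegral
open scoped Interval

noncomputable def FPrim (g : ℂ → ℂ) (w : ℂ) : ℂ :=
  (∫ t in (0:ℝ)..w.re, g t) + Complex.I * ∫ t in (0:ℝ)..w.im, g (w.re + t * Complex.I)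

lemma sq_le_of_mem_uIcc {a b x : ℝ} (h : x ∈ Set.uIcc a b) : x^2 ≤ max (a^2) (b^2) := by
  rcases Set.mem_uIcc.1 h with ⟨h1, h2⟩ | ⟨h1, h2⟩ <;> rcases le_total 0 x with hx | hx
  · exact le_max_of_le_right (by nlinarith)
  · exact le_max_of_le_left (by nlinarith)
  · exact le_max_of_le_left (by nlinarith)
  · exact le_max_of_le_right (by nlinarith)

lemma abs_sub_le_of_uIcc {a b t : ℝ} (h : t ∈ Set.uIcc a b) : |t - a| ≤ |b - a| := by
  rcases Set.mem_uIcc.1 h with ⟨h1, h2⟩ | ⟨h1, h2⟩ <;> rcases abs_cases (t - a) with ⟨e, _⟩ | ⟨e, _⟩ <;>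
    rcases abs_cases (b - a) with ⟨e2, _⟩ | ⟨e2, _⟩ <;> linarith

lemma abs_le_of_uIcc {a b t : ℝ} (h : t ∈ Set.uIcc a b) : |t| ≤ max |a| |b| := by
  rcases Set.mem_uIcc.1 h with ⟨h1, h2⟩ | ⟨h1, h2⟩ <;> refine abs_le.2 ⟨?_, ?_⟩ <;>
    simp only [neg_le, le_max_iff] <;>
    first
      | (left; linarith [neg_abs_le a, le_abs_self a, neg_abs_le b, le_abs_self b])
      | (right; linarith [neg_abs_le a, le_abs_self a, neg_abs_le b, le_abs_self b])

lemma FPrim_hasDerivAt {g : ℂ → ℂ} (hg : DifferentiableOn ℂ g (ball (0:ℂ) 1))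
    {z : ℂ} (hz : z ∈ ball (0:ℂ) 1) : HasDerivAt (FPrim g) (g z) z := by
  have hzlt : ‖z‖ < 1 := by simpa [Complex.dist_eq] using hz
  rw [hasDerivAt_iff_isLittleO, Asymptotics.isLittleO_iff]
  intro c hc
  have hgc : ContinuousAt g z := hg.continuousOn.continuousAt (isOpen_ball.mem_nhds hz)
  rcases Metric.continuousAt_iff.1 hgc (c/2) (by linarith) with ⟨δ₁, hδ₁, hmod⟩
  set m := ‖z‖ with hm
  have hm0 : 0 ≤ m := norm_nonneg z
  set δ : ℝ := min (δ₁/3) ((1 - m)/2) with hδdef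
  have hδpos : 0 < δ := lt_min (by linarith) (by linarith)
  have hδle : δ ≤ (1 - m)/2 := min_le_right _ _
  have hδle1 : δ ≤ δ₁/3 := min_le_left _ _
  filter_upwards [Metric.ball_mem_nhds z hδpos] with w hw
  set a := z.re with ha'
  set b := w.re with hb'
  set cc := z.im with hcc'
  set d := w.im with hd'
  have hwz : ‖w - z‖ < δ := by simpa [Complex.dist_eq] using hw
  have habs_re : |b - a| ≤ ‖w - z‖ := by
    simpa [Complex.sub_re] using Complex.abs_re_le_norm (w - z)
  have habs_im : |d - cc| ≤ ‖w - z‖ := by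
    simpa [Complex.sub_im] using Complex.abs_im_le_norm (w - z)
  have hare : |a| ≤ m := Complex.abs_re_le_norm z
  have haim : |cc| ≤ m := Complex.abs_im_le_norm z
  have hsq : a^2 + cc^2 = m^2 := by
    rw [hm, Complex.sq_norm, Complex.normSq_apply]; ring
  -- all points with |x| ≤ |a| + δ, |y| ≤ |cc| + δ are in the unit ball
  have hptmem : ∀ x y : ℝ, |x| ≤ |a| + δ → |y| ≤ |cc| + δ → (x:ℂ) + y * Complex.I ∈ ball (0:ℂ) 1 := by
    intro x y hx hy
    simp only [mem_ball, dist_zero_right]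
    have hax : ‖(x:ℂ) + y * Complex.I‖ ^ 2 = x^2 + y^2 := by
      rw [Complex.sq_norm, Complex.normSq_apply]
      simp [Complex.add_re, Complex.add_im]
      ring
    nlinarith [norm_nonneg ((x:ℂ) + y * Complex.I), _root_.sq_abs x, _root_.sq_abs y,
      abs_nonneg x, abs_nonneg y, abs_nonneg a, abs_nonneg cc, _root_.sq_abs a, _root_.sq_abs cc]
  have hbnd : |b| ≤ |a| + δ := by
    have h1 : |b - a| ≤ δ := le_of_lt (lt_of_le_of_lt habs_re hwz)
    calc |b| = |a + (b - a)| := by ring_nf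
    _ ≤ |a| + |b - a| := abs_add_le _ _
    _ ≤ |a| + δ := by linarith
  have hdnd : |d| ≤ |cc| + δ := by
    have h1 : |d - cc| ≤ δ := le_of_lt (lt_of_le_of_lt habs_im hwz)
    calc |d| = |cc + (d - cc)| := by ring_nf
    _ ≤ |cc| + |d - cc| := abs_add_le _ _
    _ ≤ |cc| + δ := by linarith
  have hgcont := hg.continuousOn
  -- integrability of all segments
  have int0a : IntervalIntegrable (fun t : ℝ => g t) MeasureTheory.volume 0 a := by
    apply ContinuousOn.intervalIntegrable
    refine hgcont.comp (Continuous.continuousOn Complex.continuous_ofReal) fun t ht => ?_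
    have := abs_le_of_uIcc ht
    simp only [abs_zero] at this
    have : |t| ≤ |a| := by simpa [max_comm] using this.trans (max_le (by positivity) le_rfl)
    simpa using hptmem t 0 (by linarith) (by simp; positivity)
  have intH : ∀ y p q : ℝ, |y| ≤ |cc| + δ → |p| ≤ |a| + δ → |q| ≤ |a| + δ →
      IntervalIntegrable (fun t : ℝ => g ((t:ℂ) + y * Complex.I)) MeasureTheory.volume p q := by
    intro y p q hy hp hq
    apply ContinuousOn.intervalIntegrable
    refine hgcont.comp (Continuous.continuousOn
      (Complex.continuous_ofReal.add continuous_const)) fun t ht => ?_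
    exact hptmem t y ((abs_le_of_uIcc ht).trans (max_le hp hq)) hy
  have intV : ∀ x p q : ℝ, |x| ≤ |a| + δ → |p| ≤ |cc| + δ → |q| ≤ |cc| + δ →
      IntervalIntegrable (fun t : ℝ => g ((x:ℂ) + t * Complex.I)) MeasureTheory.volume p q := by
    intro x p q hx hp hq
    apply ContinuousOn.intervalIntegrable
    refine hgcont.comp (Continuous.continuousOn
      (continuous_const.add (Complex.continuous_ofReal.mul continuous_const))) fun t ht => ?_
    exact hptmem x t hx ((abs_le_of_uIcc ht).trans (max_le hp hq))
  have hgr : (fun t : ℝ => g ((t:ℂ) + (0:ℝ) * Complex.I)) = fun t : ℝ => g (t:ℂ) := by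
    funext t; simp
  have habs0 : |(0:ℝ)| ≤ |cc| + δ := by simp; positivity
  have habsa : |a| ≤ |a| + δ := by linarith
  have habscc : |cc| ≤ |cc| + δ := by linarith
  have int0b : IntervalIntegrable (fun t : ℝ => g (t:ℂ)) MeasureTheory.volume 0 b := by
    rw [← hgr]; exact intH 0 0 b habs0 (by simp; positivity) hbnd
  have int0a' : IntervalIntegrable (fun t : ℝ => g (t:ℂ)) MeasureTheory.volume 0 a := by
    rw [← hgr]; exact intH 0 0 a habs0 (by simp; positivity) habsa
  have intH2 : IntervalIntegrable (fun t : ℝ => g ((t:ℂ) + cc * Complex.I))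
      MeasureTheory.volume a b := intH cc a b habscc habsa hbnd
  have intVb0c := intV b 0 cc hbnd habs0 habscc
  have intVb0d := intV b 0 d hbnd habs0 hdnd
  have intVbcd := intV b cc d hbnd habscc hdnd
  -- the rectangle theorem
  have hrectsub : [[((a:ℝ):ℂ).re, ((b:ℝ):ℂ) + ((cc:ℝ):ℂ) * Complex.I |>.re]] ×ℂ
      [[((a:ℝ):ℂ).im, ((b:ℝ):ℂ) + ((cc:ℝ):ℂ) * Complex.I |>.im]] ⊆ ball (0:ℂ) 1 := by
    simp only [Complex.ofReal_re, Complex.ofReal_im, Complex.add_re, Complex.add_im,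
      Complex.mul_I_re, Complex.mul_I_im, neg_zero, add_zero, zero_add]
    rintro u ⟨h1, h2⟩
    rw [← Complex.re_add_im u]
    exact hptmem u.re u.im ((abs_le_of_uIcc h1).trans (max_le habsa hbnd))
      ((abs_le_of_uIcc h2).trans (max_le habs0 habscc))
  have rect := Complex.integral_boundary_rect_eq_zero_of_differentiableOn g ((a:ℝ):ℂ)
      (((b:ℝ):ℂ) + ((cc:ℝ):ℂ) * Complex.I) (hg.mono hrectsub)
  simp only [Complex.ofReal_re, Complex.ofReal_im, Complex.add_re, Complex.add_im,
    Complex.mul_I_re, Complex.mul_I_im, neg_zero, add_zero, zero_add, Complex.ofReal_zero,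
    zero_mul, smul_eq_mul] at rect
  have sub1 := intervalIntegral.integral_interval_sub_left int0b int0a'
  have sub2 := intervalIntegral.integral_interval_sub_left intVb0d intVb0c
  have hconst : ∀ p q : ℝ, (∫ _ in p..q, g z) = ((q - p : ℝ):ℂ) * g z := by
    intro p q; rw [intervalIntegral.integral_const, Complex.real_smul]
  have hsub1' : (∫ t in a..b, (g ((t:ℂ) + cc * Complex.I) - g z))
      = (∫ t in a..b, g ((t:ℂ) + cc * Complex.I)) - ((b - a : ℝ):ℂ) * g z := by
    rw [intervalIntegral.integral_sub intH2 intervalIntegrable_const, hconst]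
  have hsub2' : (∫ t in cc..d, (g ((b:ℂ) + t * Complex.I) - g z))
      = (∫ t in cc..d, g ((b:ℂ) + t * Complex.I)) - ((d - cc : ℝ):ℂ) * g z := by
    rw [intervalIntegral.integral_sub intVbcd intervalIntegrable_const, hconst]
  have hwzdecomp : w - z = ((b - a : ℝ):ℂ) + ((d - cc : ℝ):ℂ) * Complex.I := by
    apply Complex.ext <;> simp [hb', hd', ha', hcc']
  have key : FPrim g w - FPrim g z - (w - z) • g z
      = (∫ t in a..b, (g ((t:ℂ) + cc * Complex.I) - g z))
        + Complex.I * ∫ t in cc..d, (g ((b:ℂ) + t * Complex.I) - g z) := by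
    have hw1 : FPrim g w = (∫ t in (0:ℝ)..b, g t)
        + Complex.I * ∫ t in (0:ℝ)..d, g ((b:ℂ) + t * Complex.I) := by
      rw [hb', hd']; rfl
    have hz1 : FPrim g z = (∫ t in (0:ℝ)..a, g t)
        + Complex.I * ∫ t in (0:ℝ)..cc, g ((a:ℂ) + t * Complex.I) := by
      rw [ha', hcc']; rfl
    rw [smul_eq_mul, hwzdecomp, hsub1', hsub2', hw1, hz1]
    linear_combination rect + sub1 + Complex.I * sub2
  rw [key]
  have hz' : z = ((a:ℝ):ℂ) + ((cc:ℝ):ℂ) * Complex.I := by rw [ha', hcc', Complex.re_add_im]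
  have e1 : ‖∫ t in a..b, (g ((t:ℂ) + cc * Complex.I) - g z)‖ ≤ (c/2) * |b - a| := by
    apply intervalIntegral.norm_integral_le_of_norm_le_const
    intro t ht
    have ht' := abs_sub_le_of_uIcc (Set.uIoc_subset_uIcc ht)
    have hdist : dist ((t:ℂ) + cc * Complex.I) z < δ₁ := by
      rw [Complex.dist_eq, hz']
      have : (t:ℂ) + cc * Complex.I - (((a:ℝ):ℂ) + ((cc:ℝ):ℂ) * Complex.I) = ((t - a : ℝ):ℂ) := by
        push_cast; ring
      rw [this, Complex.norm_real, Real.norm_eq_abs]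
      calc |t - a| ≤ |b - a| := ht'
      _ < δ := lt_of_le_of_lt habs_re hwz
      _ ≤ δ₁/3 := hδle1
      _ < δ₁ := by linarith
    rw [← dist_eq_norm]
    exact le_of_lt (hmod hdist)
  have e2 : ‖∫ t in cc..d, (g ((b:ℂ) + t * Complex.I) - g z)‖ ≤ (c/2) * |d - cc| := by
    apply intervalIntegral.norm_integral_le_of_norm_le_const
    intro t ht
    have ht' := abs_sub_le_of_uIcc (Set.uIoc_subset_uIcc ht)
    have hdist : dist ((b:ℂ) + t * Complex.I) z < δ₁ := by
      rw [Complex.dist_eq, hz']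
      have : (b:ℂ) + t * Complex.I - (((a:ℝ):ℂ) + ((cc:ℝ):ℂ) * Complex.I)
          = ((b - a : ℝ):ℂ) + ((t - cc : ℝ):ℂ) * Complex.I := by push_cast; ring
      rw [this]
      calc ‖((b - a : ℝ):ℂ) + ((t - cc : ℝ):ℂ) * Complex.I‖
          ≤ ‖((b - a : ℝ):ℂ)‖ + ‖((t - cc : ℝ):ℂ) * Complex.I‖ :=
            norm_add_le _ _
      _ = |b - a| + |t - cc| := by
            rw [norm_mul, Complex.norm_I, mul_one, Complex.norm_real, Complex.norm_real, Real.norm_eq_abs, Real.norm_eq_abs]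
      _ < δ + δ := by
            have h1 : |b - a| < δ := lt_of_le_of_lt habs_re hwz
            have h2 : |t - cc| < δ := lt_of_le_of_lt ht' (lt_of_le_of_lt habs_im hwz)
            linarith
      _ ≤ δ₁/3 + δ₁/3 := by linarith
      _ < δ₁ := by linarith
    rw [← dist_eq_norm]
    exact le_of_lt (hmod hdist)
  have hwznorm : ‖w - z‖ = ‖w - z‖ := rfl
  calc ‖(∫ t in a..b, (g ((t:ℂ) + cc * Complex.I) - g z))
        + Complex.I * ∫ t in cc..d, (g ((b:ℂ) + t * Complex.I) - g z)‖
      ≤ ‖∫ t in a..b, (g ((t:ℂ) + cc * Complex.I) - g z)‖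
        + ‖Complex.I * ∫ t in cc..d, (g ((b:ℂ) + t * Complex.I) - g z)‖ := norm_add_le _ _
    _ = ‖∫ t in a..b, (g ((t:ℂ) + cc * Complex.I) - g z)‖
        + ‖∫ t in cc..d, (g ((b:ℂ) + t * Complex.I) - g z)‖ := by
          rw [norm_mul, Complex.norm_I, one_mul]
    _ ≤ (c/2) * |b - a| + (c/2) * |d - cc| := add_le_add e1 e2
    _ ≤ (c/2) * ‖w - z‖ + (c/2) * ‖w - z‖ := by
          rw [hwznorm]
          exact add_le_add (mul_le_mul_of_nonneg_left habs_re (le_of_lt (half_pos hc)))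
            (mul_le_mul_of_nonneg_left habs_im (le_of_lt (half_pos hc)))
    _ = c * ‖w - z‖ := by ring

open Complex Metric Set

noncomputable def conjGrad (h : ℂ → ℝ) (z : ℂ) : ℂ :=
  ((fderiv ℝ h z 1 : ℝ) : ℂ) - ((fderiv ℝ h z Complex.I : ℝ) : ℂ) * Complex.I

lemma conjGrad_hasDerivAt {h : ℂ → ℝ} (hharm : HarmonicOn h (ball (0:ℂ) 1))
    {z : ℂ} (hz : z ∈ ball (0:ℂ) 1) :
    ∃ c : ℂ, HasDerivAt (conjGrad h) c z := by
  obtain ⟨hC2, hlap⟩ := hharm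
  have hball : IsOpen (ball (0:ℂ) 1) := isOpen_ball
  have hfd : ContDiffOn ℝ 1 (fderiv ℝ h) (ball (0:ℂ) 1) :=
    hC2.fderiv_of_isOpen hball (by norm_num)
  have hdiffA : DifferentiableAt ℝ (fderiv ℝ h) z :=
    ((hfd.differentiableOn (by norm_num)) z hz).differentiableAt (hball.mem_nhds hz)
  set A := fderiv ℝ (fderiv ℝ h) z with hA
  have hAder : HasFDerivAt (fderiv ℝ h) A z := hdiffA.hasFDerivAt
  -- symmetry of second derivative
  have hev : ∀ᶠ y in nhds z, HasFDerivAt h (fderiv ℝ h y) y := by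
    filter_upwards [hball.mem_nhds hz] with y hy
    exact (((hC2.differentiableOn (by norm_num)) y hy).differentiableAt
      (hball.mem_nhds hy)).hasFDerivAt
  have hsymm := second_derivative_symmetric_of_eventually hev hAder
  -- harmonicity in terms of A
  have hApp : ∀ v : ℂ, fderiv ℝ (fun w => fderiv ℝ h w v) z
      = (ContinuousLinearMap.apply ℝ ℝ v).comp A := by
    intro v
    exact (((ContinuousLinearMap.apply ℝ ℝ v).hasFDerivAt).comp z hAder).fderiv
  have hlap' : A 1 1 + A Complex.I Complex.I = 0 := by
    have := hlap z hz
    rw [hApp 1, hApp Complex.I] at this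
    simpa using this
  -- the real derivative of conjGrad
  set c : ℂ := ((A 1 1 : ℝ) : ℂ) - ((A 1 Complex.I : ℝ) : ℂ) * Complex.I with hc
  refine ⟨c, ?_⟩
  have h1 : HasFDerivAt (fun w => ((fderiv ℝ h w 1 : ℝ) : ℂ))
      (Complex.ofRealCLM.comp ((ContinuousLinearMap.apply ℝ ℝ (1:ℂ)).comp A)) z :=
    Complex.ofRealCLM.hasFDerivAt.comp z
      (((ContinuousLinearMap.apply ℝ ℝ (1:ℂ)).hasFDerivAt).comp z hAder)
  have h2 : HasFDerivAt (fun w => ((fderiv ℝ h w Complex.I : ℝ) : ℂ) * Complex.I)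
      (Complex.I • (Complex.ofRealCLM.comp
        ((ContinuousLinearMap.apply ℝ ℝ (Complex.I : ℂ)).comp A))) z :=
    (Complex.ofRealCLM.hasFDerivAt.comp z
      (((ContinuousLinearMap.apply ℝ ℝ (Complex.I : ℂ)).hasFDerivAt).comp z hAder)).mul_const
      Complex.I
  have hG : HasFDerivAt (conjGrad h)
      ((Complex.ofRealCLM.comp ((ContinuousLinearMap.apply ℝ ℝ (1:ℂ)).comp A))
        - Complex.I • (Complex.ofRealCLM.comp
            ((ContinuousLinearMap.apply ℝ ℝ (Complex.I : ℂ)).comp A))) z := h1.sub h2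
  rw [hasDerivAt_iff_hasFDerivAt]
  apply hasFDerivAt_of_restrictScalars ℝ hG
  apply ContinuousLinearMap.ext
  intro v
  have hv : v = (v.re : ℝ) • (1:ℂ) + (v.im : ℝ) • Complex.I := by
    simp [Complex.real_smul, Complex.re_add_im]
  rw [hv, map_add, map_add, map_smul, map_smul, map_smul, map_smul]
  have e1 : ((ContinuousLinearMap.toSpanSingleton ℂ c).restrictScalars ℝ) (1:ℂ) = c := by
    simp
  have eI : ((ContinuousLinearMap.toSpanSingleton ℂ c).restrictScalars ℝ) Complex.I
      = Complex.I * c := by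
    simp [smul_eq_mul]
  have f1 : ((Complex.ofRealCLM.comp ((ContinuousLinearMap.apply ℝ ℝ (1:ℂ)).comp A))
        - Complex.I • (Complex.ofRealCLM.comp
            ((ContinuousLinearMap.apply ℝ ℝ (Complex.I : ℂ)).comp A))) (1:ℂ) = c := by
    simp [hc, smul_eq_mul]
    ring
  have fI : ((Complex.ofRealCLM.comp ((ContinuousLinearMap.apply ℝ ℝ (1:ℂ)).comp A))
        - Complex.I • (Complex.ofRealCLM.comp
            ((ContinuousLinearMap.apply ℝ ℝ (Complex.I : ℂ)).comp A))) Complex.I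
      = Complex.I * c := by
    have hs : A Complex.I 1 = A 1 Complex.I := hsymm _ _
    have hii : A Complex.I Complex.I = -(A 1 1) := by linarith
    simp [hc, smul_eq_mul, hs, hii]
    push_cast
    ring_nf
    rw [Complex.I_sq]
    ring
  rw [e1, eI, f1, fI]

lemma re_FPrim_sub_const {h : ℂ → ℝ} (hharm : HarmonicOn h (ball (0:ℂ) 1))
    {F : ℂ → ℂ} (hF : ∀ z ∈ ball (0:ℂ) 1, HasDerivAt F (conjGrad h z) z)
    {z : ℂ} (hz : z ∈ ball (0:ℂ) 1) :
    (F z).re - h z = (F 0).re - h 0 := by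
  have hball : IsOpen (ball (0:ℂ) 1) := isOpen_ball
  set u : ℂ → ℝ := fun w => (F w).re - h w with hu
  have hder : ∀ w ∈ ball (0:ℂ) 1, HasFDerivAt u (0 : ℂ →L[ℝ] ℝ) w := by
    intro w hw
    have hhd : HasFDerivAt h (fderiv ℝ h w) w :=
      (((hharm.1.differentiableOn (by norm_num)) w hw).differentiableAt
        (hball.mem_nhds hw)).hasFDerivAt
    have hre : HasFDerivAt (fun y => (F y).re)
        (Complex.reCLM.comp ((ContinuousLinearMap.smulRight (1 : ℂ →L[ℂ] ℂ)
          (conjGrad h w)).restrictScalars ℝ)) w :=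
      Complex.reCLM.hasFDerivAt.comp w
        ((hasDerivAt_iff_hasFDerivAt.1 (hF w hw)).restrictScalars ℝ)
    have key : Complex.reCLM.comp ((ContinuousLinearMap.smulRight (1 : ℂ →L[ℂ] ℂ)
        (conjGrad h w)).restrictScalars ℝ) - fderiv ℝ h w = 0 := by
      apply ContinuousLinearMap.ext
      intro v
      have hv : v = (v.re : ℝ) • (1:ℂ) + (v.im : ℝ) • Complex.I := by
        simp [Complex.real_smul, Complex.re_add_im]
      rw [hv]
      simp only [ContinuousLinearMap.sub_apply, ContinuousLinearMap.coe_comp',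
        Function.comp_apply, ContinuousLinearMap.coe_restrictScalars', map_add, map_smul,
        ContinuousLinearMap.smulRight_apply, ContinuousLinearMap.one_apply,
        ContinuousLinearMap.zero_apply]
      have e1 : Complex.reCLM ((1:ℂ) • conjGrad h w) = fderiv ℝ h w 1 := by
        simp [conjGrad]
      have e2 : Complex.reCLM (Complex.I • conjGrad h w) = fderiv ℝ h w Complex.I := by
        simp [conjGrad, smul_eq_mul]
      rw [e1, e2]
      simp
    have := (hre.sub hhd)
    rwa [key] at this
  have hdiff : DifferentiableOn ℝ u (ball (0:ℂ) 1) := fun w hw =>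
    ((hder w hw).differentiableAt).differentiableWithinAt
  have hzero : ∀ w ∈ ball (0:ℂ) 1, ‖fderivWithin ℝ u (ball (0:ℂ) 1) w‖ ≤ 0 := by
    intro w hw
    rw [fderivWithin_of_isOpen hball hw, (hder w hw).fderiv]
    simp
  have h0m : (0:ℂ) ∈ ball (0:ℂ) 1 := by simp
  have := Convex.norm_image_sub_le_of_norm_fderivWithin_le hdiff hzero
    (convex_ball 0 1) h0m hz
  simp only [zero_mul, norm_le_zero_iff, sub_eq_zero] at this
  exact this

open Complex Metric Set

lemma sector_interior {ρ θ₁ θ₂ s θ : ℝ} (hs : 0 < s) (hsρ : s < ρ)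
    (hθa : θ₁ < θ) (hθb : θ < θ₂) :
    (s:ℂ) * Complex.exp (θ * Complex.I) ∈ interior
      ((fun p : ℝ × ℝ => (p.1 : ℂ) * Complex.exp (p.2 * Complex.I)) ''
        (Set.Icc 0 ρ ×ˢ Set.Icc θ₁ θ₂)) := by
  rw [mem_interior_iff_mem_nhds]
  set z₀ : ℂ := (s:ℂ) * Complex.exp (θ * Complex.I) with hz₀
  have habs0 : ‖z₀‖ = s := by
    rw [hz₀, norm_mul, Complex.norm_real, Real.norm_eq_abs, Complex.norm_exp_ofReal_mul_I, mul_one,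
      abs_of_pos hs]
  have hrot : z₀ * Complex.exp (-(θ:ℝ) * Complex.I) = (s:ℂ) := by
    rw [hz₀, mul_assoc, ← Complex.exp_add]
    push_cast
    ring_nf
    simp
  have hC1 : {w : ℂ | ‖w‖ ∈ Set.Ioo 0 ρ} ∈ nhds z₀ := by
    apply ContinuousAt.preimage_mem_nhds continuous_norm.continuousAt
    rw [habs0]
    exact isOpen_Ioo.mem_nhds ⟨hs, hsρ⟩
  have hargc : ContinuousAt (fun w : ℂ => Complex.arg (w * Complex.exp (-(θ:ℝ) * Complex.I))) z₀ := by
    have hc1 : ContinuousAt (fun w : ℂ => w * Complex.exp (-(θ:ℝ) * Complex.I)) z₀ :=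
      (continuous_id.mul continuous_const).continuousAt
    have hc2 : ContinuousAt Complex.arg (z₀ * Complex.exp (-(θ:ℝ) * Complex.I)) := by
      rw [hrot]
      apply Complex.continuousAt_arg
      simp [Complex.mem_slitPlane_iff, hs]
    exact ContinuousAt.comp (g := Complex.arg)
      (f := fun w : ℂ => w * Complex.exp (-(θ:ℝ) * Complex.I)) hc2 hc1
  have harg0 : Complex.arg (z₀ * Complex.exp (-(θ:ℝ) * Complex.I)) = 0 := by
    rw [hrot]
    exact Complex.arg_ofReal_of_nonneg hs.le
  have hC2 : {w : ℂ | Complex.arg (w * Complex.exp (-(θ:ℝ) * Complex.I))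
      ∈ Set.Ioo (max (θ₁ - θ) (-Real.pi)) (min (θ₂ - θ) Real.pi)} ∈ nhds z₀ := by
    apply ContinuousAt.preimage_mem_nhds hargc
    rw [harg0]
    apply isOpen_Ioo.mem_nhds
    constructor
    · apply max_lt (by linarith) (by linarith [Real.pi_pos])
    · apply lt_min (by linarith) Real.pi_pos
  filter_upwards [hC1, hC2] with w h1 h2
  set a := Complex.arg (w * Complex.exp (-(θ:ℝ) * Complex.I)) with ha
  refine ⟨(‖w‖, θ + a), ⟨⟨h1.1.le, h1.2.le⟩, ?_, ?_⟩, ?_⟩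
  · have := h2.1
    have := le_max_left (θ₁ - θ) (-Real.pi)
    simp only []
    linarith
  · have := h2.2
    have := min_le_left (θ₂ - θ) Real.pi
    simp only []
    linarith
  · simp only []
    have habsw : ‖w * Complex.exp (-(θ:ℝ) * Complex.I)‖ = ‖w‖ := by
      simp [norm_mul, Complex.norm_exp]
    have hdec := Complex.norm_mul_exp_arg_mul_I (w * Complex.exp (-(θ:ℝ) * Complex.I))
    rw [habsw, ← ha] at hdec
    have : w = (‖w‖ : ℂ) * Complex.exp ((a:ℝ) * Complex.I)
        * Complex.exp ((θ:ℝ) * Complex.I) := by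
      rw [hdec]
      rw [mul_assoc, ← Complex.exp_add]
      push_cast
      ring_nf
      simp
    conv_rhs => rw [this]
    rw [mul_assoc, ← Complex.exp_add]
    congr 1
    push_cast
    ring

/-- Maximum-principle estimate on a sector: let `h > 0` be harmonic on the disc, let
`I = {e^{iθ} : θ ∈ [θ₁, θ₂]}` be a closed subarc with endpoints `ζ₁ = e^{iθ₁} ≠ ζ₂ = e^{iθ₂}`,
and let `f` be holomorphic on the disc with `|f| ≤ e^h` on the two radii `[0,ζ₁)`, `[0,ζ₂)`
and `|f| ≤ 1` on the arcs `r_n I` for some sequence `r_n → 1⁻`. Then `|f| ≤ e^h` on the whole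
sector `{rζ : 0 ≤ r < 1, ζ ∈ I}`. -/
theorem stmt16 (h : ℂ → ℝ) (hharm : HarmonicOn h (Metric.ball (0 : ℂ) 1))
    (hpos : ∀ z ∈ Metric.ball (0 : ℂ) 1, 0 < h z)
    (θ₁ θ₂ : ℝ) (hθ : θ₁ < θ₂) (hθ2 : θ₂ - θ₁ < 2 * Real.pi)
    (ζ₁ ζ₂ : ℂ) (hζ₁ : ζ₁ = Complex.exp (θ₁ * Complex.I))
    (hζ₂ : ζ₂ = Complex.exp (θ₂ * Complex.I)) (hne : ζ₁ ≠ ζ₂)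
    (I : Set ℂ) (hI : I = (fun θ : ℝ => Complex.exp (θ * Complex.I)) '' Set.Icc θ₁ θ₂)
    (f : ℂ → ℂ) (hf : DifferentiableOn ℂ f (Metric.ball (0 : ℂ) 1))
    (hrad : ∀ r : ℝ, 0 ≤ r → r < 1 →
      ‖f ((r : ℂ) * ζ₁)‖ ≤ Real.exp (h ((r : ℂ) * ζ₁)) ∧
      ‖f ((r : ℂ) * ζ₂)‖ ≤ Real.exp (h ((r : ℂ) * ζ₂)))
    (rn : ℕ → ℝ) (hrn0 : ∀ n, 0 ≤ rn n) (hrn1 : ∀ n, rn n < 1)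
    (hrnlim : Tendsto rn atTop (nhds 1))
    (harc : ∀ n, ∀ ζ ∈ I, ‖f ((rn n : ℂ) * ζ)‖ ≤ 1) :
    ∀ r : ℝ, 0 ≤ r → r < 1 → ∀ ζ ∈ I,
      ‖f ((r : ℂ) * ζ)‖ ≤ Real.exp (h ((r : ℂ) * ζ)) := by
  classical
  have hgd : DifferentiableOn ℂ (conjGrad h) (Metric.ball (0:ℂ) 1) := by
    intro z hz
    obtain ⟨c0, hc0⟩ := conjGrad_hasDerivAt hharm hz
    exact hc0.differentiableAt.differentiableWithinAt
  set F : ℂ → ℂ := FPrim (conjGrad h) with hFdef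
  have hFder : ∀ z ∈ Metric.ball (0:ℂ) 1, HasDerivAt F (conjGrad h z) z :=
    fun z hz => FPrim_hasDerivAt hgd hz
  have hFdiff : DifferentiableOn ℂ F (Metric.ball (0:ℂ) 1) :=
    fun z hz => (hFder z hz).differentiableAt.differentiableWithinAt
  set C : ℝ := (F 0).re - h 0 with hCdef
  have hreF : ∀ z ∈ Metric.ball (0:ℂ) 1, (F z).re = h z + C := by
    intro z hz
    have := re_FPrim_sub_const hharm hFder hz
    rw [hCdef]
    linarith
  set G : ℂ → ℂ := fun w => f w * Complex.exp ((C:ℂ) - F w) with hGdef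
  have hGdiff : DifferentiableOn ℂ G (Metric.ball (0:ℂ) 1) :=
    hf.mul ((differentiableOn_const _).sub hFdiff).cexp
  have hGabs : ∀ w ∈ Metric.ball (0:ℂ) 1,
      ‖G w‖ = ‖f w‖ * Real.exp (-(h w)) := by
    intro w hw
    rw [hGdef]
    simp only [norm_mul, Complex.norm_exp]
    congr 2
    rw [Complex.sub_re, Complex.ofReal_re, hreF w hw]
    ring
  have hGle : ∀ w ∈ Metric.ball (0:ℂ) 1,
      ‖f w‖ ≤ Real.exp (h w) → ‖G w‖ ≤ 1 := by
    intro w hw hle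
    rw [hGabs w hw]
    calc ‖f w‖ * Real.exp (-(h w))
        ≤ Real.exp (h w) * Real.exp (-(h w)) :=
          mul_le_mul_of_nonneg_right hle (Real.exp_pos _).le
      _ = 1 := by rw [← Real.exp_add]; simp
  set P : ℝ × ℝ → ℂ := fun p => (p.1 : ℂ) * Complex.exp (p.2 * Complex.I) with hPdef
  have hPcont : Continuous P := by
    apply Continuous.mul
    · exact Complex.continuous_ofReal.comp continuous_fst
    · exact Complex.continuous_exp.comp
        ((Complex.continuous_ofReal.comp continuous_snd).mul continuous_const)
  set K : ℕ → Set ℂ := fun n => P '' (Set.Icc 0 (rn n) ×ˢ Set.Icc θ₁ θ₂) with hKdef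
  have habsP : ∀ s φ : ℝ, 0 ≤ s → ‖(s:ℂ) * Complex.exp ((φ:ℝ) * Complex.I)‖ = s := by
    intro s φ hs
    rw [norm_mul, Complex.norm_real, Real.norm_eq_abs, Complex.norm_exp_ofReal_mul_I, mul_one, _root_.abs_of_nonneg hs]
  have hKsub : ∀ n, K n ⊆ Metric.ball (0:ℂ) 1 := by
    rintro n w ⟨⟨s, φ⟩, ⟨⟨hs0, hs1⟩, _⟩, rfl⟩
    rw [mem_ball_zero_iff]
    show ‖(s:ℂ) * Complex.exp ((φ:ℝ) * Complex.I)‖ < 1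
    rw [habsP s φ hs0]
    exact lt_of_le_of_lt hs1 (hrn1 n)
  have hKcl : ∀ n, IsClosed (K n) :=
    fun n => ((isCompact_Icc.prod isCompact_Icc).image hPcont).isClosed
  have hclsub : ∀ n, closure (interior (K n)) ⊆ Metric.ball (0:ℂ) 1 := by
    intro n
    calc closure (interior (K n)) ⊆ closure (K n) := closure_mono interior_subset
      _ = K n := (hKcl n).closure_eq
      _ ⊆ Metric.ball (0:ℂ) 1 := hKsub n
  have hfrontier : ∀ n, ∀ w ∈ frontier (interior (K n)), ‖G w‖ ≤ 1 := by
    intro n w hwf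
    rw [isOpen_interior.frontier_eq] at hwf
    obtain ⟨hwc, hwni⟩ := hwf
    have hwK : w ∈ K n := by
      have : closure (interior (K n)) ⊆ K n := by
        calc closure (interior (K n)) ⊆ closure (K n) := closure_mono interior_subset
          _ = K n := (hKcl n).closure_eq
      exact this hwc
    obtain ⟨⟨s, φ⟩, ⟨⟨hs0, hsr⟩, hφ1, hφ2⟩, rfl⟩ := hwK
    dsimp only at hs0 hsr hφ1 hφ2
    have hwball : P (s, φ) ∈ Metric.ball (0:ℂ) 1 :=
      hKsub n ⟨(s, φ), ⟨⟨hs0, hsr⟩, hφ1, hφ2⟩, rfl⟩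
    rcases eq_or_lt_of_le hs0 with he | hs0'
    · have hP0 : P (s, φ) = 0 := by
        show ((s:ℝ):ℂ) * Complex.exp ((φ:ℝ) * Complex.I) = 0
        rw [← he]
        simp
      rw [hP0]
      apply hGle 0 (by simp)
      have h00 := (hrad 0 le_rfl zero_lt_one).1
      simpa using h00
    rcases eq_or_lt_of_le hsr with he | hsr'
    · have hζI : Complex.exp ((φ:ℝ) * Complex.I) ∈ I := by
        rw [hI]
        exact ⟨φ, ⟨hφ1, hφ2⟩, rfl⟩
      have harcb : ‖f (P (s, φ))‖ ≤ 1 := by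
        have := harc n _ hζI
        rw [← he] at this
        exact this
      rw [hGabs _ hwball]
      calc ‖f (P (s, φ))‖ * Real.exp (-(h (P (s, φ))))
          ≤ 1 * Real.exp (-(h (P (s, φ)))) :=
            mul_le_mul_of_nonneg_right harcb (Real.exp_pos _).le
        _ = Real.exp (-(h (P (s, φ)))) := one_mul _
        _ ≤ 1 := Real.exp_le_one_iff.2 (by linarith [hpos _ hwball])
    rcases eq_or_lt_of_le hφ1 with he1 | hφ1'
    · apply hGle _ hwball
      have : P (s, φ) = (s:ℂ) * ζ₁ := by
        show ((s:ℝ):ℂ) * Complex.exp ((φ:ℝ) * Complex.I) = (s:ℂ) * ζ₁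
        rw [hζ₁, ← he1]
      rw [this]
      exact (hrad s hs0 (lt_of_lt_of_le (lt_of_lt_of_le hsr' le_rfl)
        (le_of_lt (hrn1 n)))).1
    rcases eq_or_lt_of_le hφ2 with he2 | hφ2'
    · apply hGle _ hwball
      have : P (s, φ) = (s:ℂ) * ζ₂ := by
        show ((s:ℝ):ℂ) * Complex.exp ((φ:ℝ) * Complex.I) = (s:ℂ) * ζ₂
        rw [hζ₂, he2]
      rw [this]
      exact (hrad s hs0 (lt_of_lt_of_le (lt_of_lt_of_le hsr' le_rfl)
        (le_of_lt (hrn1 n)))).2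
    · exact absurd (sector_interior hs0' hsr' hφ1' hφ2') hwni
  have hclosureG : ∀ n, ∀ w ∈ closure (interior (K n)), ‖G w‖ ≤ 1 := by
    intro n w hw
    refine Complex.norm_le_of_forall_mem_frontier_norm_le
      (Metric.isBounded_ball.subset (interior_subset.trans (hKsub n)))
      ⟨hGdiff.mono ((interior_subset.trans (hKsub n)) : interior (K n) ⊆ _),
        hGdiff.continuousOn.mono (hclsub n)⟩ (hfrontier n) hw
  intro r hr0 hr1 ζ hζ
  rw [hI] at hζ
  obtain ⟨φ, hφ, rfl⟩ := hζ
  beta_reduce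
  rcases eq_or_lt_of_le hr0 with he | hr0'
  · have h00 := (hrad 0 le_rfl zero_lt_one).1
    rw [← he]
    simpa using h00
  rcases eq_or_lt_of_le hφ.1 with he1 | hφ1'
  · have hre : Complex.exp ((φ:ℝ) * Complex.I) = ζ₁ := by rw [hζ₁, ← he1]
    rw [hre]
    exact (hrad r hr0 hr1).1
  rcases eq_or_lt_of_le hφ.2 with he2 | hφ2'
  · have hre : Complex.exp ((φ:ℝ) * Complex.I) = ζ₂ := by rw [hζ₂, he2]
    rw [hre]
    exact (hrad r hr0 hr1).2
  · obtain ⟨n, hn⟩ := (hrnlim.eventually (eventually_gt_nhds hr1)).exists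
    have hzi := sector_interior hr0' hn hφ1' hφ2'
    have hzball : (r:ℂ) * Complex.exp ((φ:ℝ) * Complex.I) ∈ Metric.ball (0:ℂ) 1 := by
      rw [mem_ball_zero_iff]
      show ‖_‖ < 1
      rw [habsP r φ hr0]
      exact hr1
    have hG1 := hclosureG n _ (subset_closure hzi)
    rw [hGabs _ hzball, Real.exp_neg, ← div_eq_mul_inv] at hG1
    exact (div_le_one (Real.exp_pos _)).mp hG1
end
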